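/- For every complex s = σ + it with σ ∈ (1/2, 1), |t| ≥ 2 and every δ ∈ (0,1), one has |Γ(1−s) δ^{s−1}| ≤ √(2π) · e^{−π|t|/2} · δ^{σ−1}. -/

import Mathlib

open Complex Real

private lemma gamma_half_line' (x : ℝ) :
    ‖Complex.Gamma (1/2 - x * I)‖^2 = π / Real.cosh (π * x) := by
  have hconj : (starRingEnd ℂ) ((1:ℂ)/2 - x * I) = 1 - ((1:ℂ)/2 - x * I) := by
    simp [Complex.ext_iff]; norm_num
  have h := Complex.Gamma_mul_Gamma_one_sub ((1:ℂ)/2 - x * I)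
  rw [← hconj, Complex.Gamma_conj, Complex.mul_conj'] at h
  have hsin : Complex.sin (π * ((1:ℂ)/2 - x * I)) = (Real.cosh (π * x) : ℂ) := by
    have h2 : (π : ℂ) * ((1:ℂ)/2 - x * I) = π/2 - (π * x : ℝ) * I := by push_cast; ring
    rw [h2, Complex.sin_pi_div_two_sub, Complex.ofReal_cosh, ← Complex.cos_mul_I]
  rw [hsin] at h
  have h3 : ((‖Complex.Gamma (1/2 - x * I)‖^2 : ℝ) : ℂ) = ((π / Real.cosh (π * x) : ℝ) : ℂ) := by
    rw [Complex.ofReal_pow, Complex.ofReal_div, h]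
  exact_mod_cast h3

private lemma poly_key' (a u G g : ℝ) (ha : 0 ≤ a) (ha' : a ≤ 1/2) (hu : 4 ≤ u)
    (hG1 : 1.32933 ≤ G) (hG2 : G ≤ 1.32935) (hg0 : 0 ≤ g) (hg : g ≤ 1 + 2*a*(G-1)) :
    g^2 * ((9/4+u)*(1/4+u)) ≤ G^2 * ((a^2+u)*((1+a)^2+u)) := by
  have h1 : g^2 ≤ (1 + 2*a*(G-1))^2 := by nlinarith
  have hQ : 0 ≤ -9/8 - 5*u + 2*u*G^2 - 2*u^2 + 2*u^2*G^2
      + a*(9/4 - (9/2)*G + 10*u - 20*u*G + 8*u*G^2 + 4*u^2 - 8*u^2*G + 4*u^2*G^2)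
      - (5/2)*a^2*G^2 - a^3*G^2 := by
    nlinarith [sq_nonneg (G-1), mul_nonneg ha (mul_nonneg (sub_nonneg.2 hu) (sub_nonneg.2 hu)),
      mul_nonneg (mul_nonneg ha (sub_nonneg.2 hu)) (sq_nonneg (G-1)),
      mul_nonneg (sub_nonneg.2 hu) (sub_nonneg.2 hu), sq_nonneg (a - 1/2),
      mul_nonneg ha (sq_nonneg (G-1)), mul_nonneg (mul_nonneg ha ha) ha,
      mul_nonneg (sub_nonneg.2 hu) (sub_nonneg.2 hG1)]
  have hprod := mul_nonneg (sub_nonneg.2 ha') hQ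
  nlinarith [hprod, h1]

private lemma beta_shift' (a t : ℝ) (ha : 0 < a) (ha' : a < 1/2) :
    ‖Complex.Gamma ((a:ℂ) + 2 - t * I)‖ * Real.Gamma (5/2) ≤
      ‖Complex.Gamma ((5/2:ℂ) - t * I)‖ * Real.Gamma (a + 2) := by
  set z : ℂ := (a:ℂ) + 2 - t * I with hz_def
  set w : ℂ := ((1/2 - a : ℝ) : ℂ) with hw_def
  have hz : 0 < z.re := by simp [hz_def]; linarith
  have hw : 0 < w.re := by simp [hw_def]; linarith
  have hzw : z + w = ((5/2):ℂ) - t * I := by rw [hz_def, hw_def]; push_cast; ring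
  have hbeta := Complex.Gamma_mul_Gamma_eq_betaIntegral hz hw
  set g : ℝ → ℝ := fun x => x ^ (a+1) * (1-x) ^ (-a-1/2) with hg_def
  have hnorm_eq : ∀ x ∈ Set.Icc (0:ℝ) 1,
      ‖(x:ℂ) ^ (z - 1) * ((1:ℂ) - x) ^ (w - 1)‖ = g x := by
    intro x hx
    have hzre : (z - 1).re = a + 1 := by simp [hz_def]; ring
    have hwre : (w - 1).re = -a - 1/2 := by simp [hw_def]; ring
    have h1 : ‖(x:ℂ) ^ (z - 1)‖ = x ^ (a+1) := by
      rcases eq_or_lt_of_le hx.1 with h0 | h0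
      · rw [← h0]
        rw [show ((0:ℝ):ℂ) = 0 by norm_num, Complex.zero_cpow (by
          intro h; have := congrArg Complex.re h; rw [hzre] at this; simp at this; linarith),
          Real.zero_rpow (by positivity)]
        simp
      · rw [Complex.norm_cpow_eq_rpow_re_of_pos h0, hzre]
    have h2 : ‖((1:ℂ) - x) ^ (w - 1)‖ = (1-x) ^ (-a-1/2) := by
      have hcast : ((1:ℂ) - x) = ((1 - x : ℝ) : ℂ) := by push_cast; ring
      rcases eq_or_lt_of_le hx.2 with h1' | h1'
      · rw [hcast, h1']
        rw [show ((1 - (1:ℝ) : ℝ):ℂ) = 0 by norm_num, Complex.zero_cpow (by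
          intro h; have := congrArg Complex.re h; rw [hwre] at this; simp at this; linarith),
          show (1 - (1:ℝ)) = (0:ℝ) by norm_num, Real.zero_rpow (by intro h; linarith)]
        simp
      · rw [hcast, Complex.norm_cpow_eq_rpow_re_of_pos (by linarith) _, hwre]
    rw [norm_mul, h1, h2, hg_def]
  have hIcc : Set.uIcc (0:ℝ) 1 = Set.Icc 0 1 := by rw [Set.uIcc_of_le]; norm_num
  have hbr : Complex.betaIntegral ((a + 2 : ℝ) : ℂ) ((1/2 - a : ℝ) : ℂ)
      = ((∫ x in (0:ℝ)..1, g x : ℝ) : ℂ) := by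
    rw [Complex.betaIntegral, ← intervalIntegral.integral_ofReal]
    apply intervalIntegral.integral_congr
    intro x hx
    rw [hIcc] at hx
    dsimp only
    have hx0 : (0:ℝ) ≤ x := hx.1
    have hx1 : (0:ℝ) ≤ 1 - x := by linarith [hx.2]
    have e1 : ((a + 2 : ℝ) : ℂ) - 1 = ((a + 1 : ℝ) : ℂ) := by push_cast; ring
    have e2 : ((1/2 - a : ℝ) : ℂ) - 1 = ((-a - 1/2 : ℝ) : ℂ) := by push_cast; ring
    have e3 : (1 : ℂ) - (x:ℂ) = ((1 - x : ℝ) : ℂ) := by push_cast; ring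
    rw [e1, e2, e3, ← Complex.ofReal_cpow hx0, ← Complex.ofReal_cpow hx1, hg_def]
    push_cast
    ring
  have hG52 : (0:ℝ) < Real.Gamma (5/2) := Real.Gamma_pos_of_pos (by norm_num)
  have hGw : (0:ℝ) < Real.Gamma (1/2 - a) := Real.Gamma_pos_of_pos (by linarith)
  have hGa2 : (0:ℝ) < Real.Gamma (a + 2) := Real.Gamma_pos_of_pos (by linarith)
  have hreal : Real.Gamma (a+2) * Real.Gamma (1/2 - a)
      = Real.Gamma (5/2) * ∫ x in (0:ℝ)..1, g x := by
    have h := Complex.Gamma_mul_Gamma_eq_betaIntegral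
      (s := ((a + 2 : ℝ) : ℂ)) (t := ((1/2 - a : ℝ) : ℂ)) (by simp; linarith) (by simp; linarith)
    rw [hbr, ← Complex.ofReal_add, Complex.Gamma_ofReal, Complex.Gamma_ofReal,
      Complex.Gamma_ofReal] at h
    have h52 : a + 2 + (1/2 - a) = (5/2 : ℝ) := by ring
    rw [h52] at h
    exact_mod_cast h
  have hble : ‖Complex.betaIntegral z w‖ ≤ ∫ x in (0:ℝ)..1, g x := by
    rw [Complex.betaIntegral]
    refine le_trans (intervalIntegral.norm_integral_le_integral_norm (by norm_num)) ?_
    apply le_of_eq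
    apply intervalIntegral.integral_congr
    intro x hx
    rw [hIcc] at hx
    exact hnorm_eq x hx
  have hGw_eq : Complex.Gamma w = ((Real.Gamma (1/2 - a) : ℝ) : ℂ) := by
    rw [hw_def, Complex.Gamma_ofReal]
  have hmain : ‖Complex.Gamma z‖ * Real.Gamma (1/2 - a)
      ≤ ‖Complex.Gamma ((5/2:ℂ) - t * I)‖ * ∫ x in (0:ℝ)..1, g x := by
    have lhs_eq : ‖Complex.Gamma z‖ * Real.Gamma (1/2 - a)
        = ‖Complex.Gamma z * Complex.Gamma w‖ := by
      rw [norm_mul, hGw_eq, Complex.norm_real, Real.norm_eq_abs, abs_of_pos hGw]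
    rw [lhs_eq, hbeta, hzw, norm_mul]
    exact mul_le_mul_of_nonneg_left hble (norm_nonneg _)
  have hint : (∫ x in (0:ℝ)..1, g x)
      = Real.Gamma (a+2) * Real.Gamma (1/2 - a) / Real.Gamma (5/2) := by
    field_simp at hreal ⊢
    linarith [hreal]
  rw [hint] at hmain
  have hr : ‖Complex.Gamma ((5/2:ℂ) - t * I)‖ * (Real.Gamma (a+2) * Real.Gamma (1/2 - a) / Real.Gamma (5/2)) * Real.Gamma (5/2)
      = (‖Complex.Gamma ((5/2:ℂ) - t * I)‖ * Real.Gamma (a + 2)) * Real.Gamma (1/2 - a) := by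
    field_simp
  have h2 := mul_le_mul_of_nonneg_right hmain (le_of_lt hG52)
  rw [hr] at h2
  have h3 : (‖Complex.Gamma z‖ * Real.Gamma (5/2)) * Real.Gamma (1/2 - a)
      ≤ (‖Complex.Gamma ((5/2:ℂ) - t * I)‖ * Real.Gamma (a + 2)) * Real.Gamma (1/2 - a) := by
    linarith [h2]
  exact le_of_mul_le_mul_right h3 hGw

set_option maxHeartbeats 2000000 in
theorem gamma_delta_bound (σ t δ : ℝ) (hσ : σ ∈ Set.Ioo (1/2 : ℝ) 1)
    (ht : 2 ≤ |t|) (hδ : δ ∈ Set.Ioo (0 : ℝ) 1) :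
    ‖Complex.Gamma (1 - (σ + t * I)) * (δ : ℂ) ^ ((σ + t * I) - 1)‖ ≤
      Real.sqrt (2 * π) * Real.exp (-π * |t| / 2) * δ ^ (σ - 1) := by
  obtain ⟨hσ1, hσ2⟩ := hσ
  obtain ⟨hδ0, hδ1⟩ := hδ
  set a : ℝ := 1 - σ with ha_def
  have ha : 0 < a := by rw [ha_def]; linarith
  have ha' : a < 1/2 := by rw [ha_def]; linarith
  have ht0 : t ≠ 0 := by
    intro h; rw [h] at ht; simp at ht; linarith
  rw [norm_mul]
  have hcpow : ‖(δ : ℂ) ^ (((σ:ℝ):ℂ) + t * I - 1)‖ = δ ^ (σ - 1) := by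
    rw [Complex.norm_cpow_eq_rpow_re_of_pos hδ0]
    congr 1
    simp
  rw [hcpow]
  have hδpow : (0:ℝ) < δ ^ (σ - 1) := Real.rpow_pos_of_pos hδ0 _
  have hmain : ‖Complex.Gamma (1 - ((σ:ℂ) + t * I))‖
      ≤ Real.sqrt (2*π) * Real.exp (-π * |t| / 2) := by
    have harg : (1:ℂ) - ((σ:ℂ) + t * I) = (a:ℂ) - t * I := by
      rw [ha_def]; push_cast; ring
    rw [harg]
    -- nonvanishing
    have hz0 : ((a:ℂ) - t * I) ≠ 0 := by
      intro h; have := congrArg Complex.im h; simp at this; exact ht0 this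
    have hz1 : ((a:ℂ) - t * I) + 1 ≠ 0 := by
      intro h; have := congrArg Complex.im h; simp at this; exact ht0 this
    have hw0 : ((1/2:ℂ) - t * I) ≠ 0 := by
      intro h; have := congrArg Complex.im h; simp at this; exact ht0 this
    have hw1 : ((1/2:ℂ) - t * I) + 1 ≠ 0 := by
      intro h; have := congrArg Complex.im h; simp at this; exact ht0 this
    -- recurrences
    have hrec : Complex.Gamma ((a:ℂ) + 2 - t * I)
        = (((a:ℂ) - t * I) + 1) * (((a:ℂ) - t * I) * Complex.Gamma ((a:ℂ) - t * I)) := by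
      have e : (a:ℂ) + 2 - t * I = (((a:ℂ) - t * I) + 1) + 1 := by ring
      rw [e, Complex.Gamma_add_one _ hz1, Complex.Gamma_add_one _ hz0]
    have hrec2 : Complex.Gamma ((5/2:ℂ) - t * I)
        = (((1/2:ℂ) - t * I) + 1) * (((1/2:ℂ) - t * I) * Complex.Gamma ((1/2:ℂ) - t * I)) := by
      have e : (5/2:ℂ) - t * I = ((((1/2:ℂ)) - t * I) + 1) + 1 := by ring
      rw [e, Complex.Gamma_add_one _ hw1, Complex.Gamma_add_one _ hw0]
    have hbs := beta_shift' a t ha ha'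
    rw [hrec, hrec2] at hbs
    rw [norm_mul, norm_mul, norm_mul, norm_mul] at hbs
    -- abbreviations
    set A := ‖Complex.Gamma ((a:ℂ) - t * I)‖ with hA_def
    set B := ‖Complex.Gamma ((1/2:ℂ) - t * I)‖ with hB_def
    set N0 := ‖(a:ℂ) - t * I‖ with hN0_def
    set N1 := ‖((a:ℂ) - t * I) + 1‖ with hN1_def
    set M0 := ‖(1/2:ℂ) - t * I‖ with hM0_def
    set M1 := ‖((1/2:ℂ) - t * I) + 1‖ with hM1_def
    set G := Real.Gamma (5/2) with hG_def
    set gg := Real.Gamma (a + 2) with hgg_def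
    -- hbs : N1 * (N0 * A) * G ≤ M1 * (M0 * B) * gg
    -- squares of norms
    have hn0 : N0^2 = a^2 + t^2 := by
      rw [hN0_def, Complex.sq_norm, Complex.normSq_apply]
      simp
      ring
    have hn1 : N1^2 = (a+1)^2 + t^2 := by
      rw [hN1_def, Complex.sq_norm, Complex.normSq_apply]
      simp
      ring
    have hm0 : M0^2 = 1/4 + t^2 := by
      rw [hM0_def, Complex.sq_norm, Complex.normSq_apply]
      simp
      ring
    have hm1 : M1^2 = 9/4 + t^2 := by
      rw [hM1_def, Complex.sq_norm, Complex.normSq_apply]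
      simp
      ring
    have hB2 : B^2 = π / Real.cosh (π * t) := by
      rw [hB_def]
      exact gamma_half_line' t
    -- Gamma(5/2) value and bounds
    have hGval : G = 3/4 * Real.sqrt π := by
      rw [hG_def, show (5/2:ℝ) = 3/2 + 1 by norm_num, Real.Gamma_add_one (by norm_num),
        show (3/2:ℝ) = 1/2 + 1 by norm_num, Real.Gamma_add_one (by norm_num),
        Real.Gamma_one_half_eq]
      ring
    have hsqpi : Real.sqrt π ^ 2 = π := Real.sq_sqrt Real.pi_pos.le
    have hs1 : 1.77245 ≤ Real.sqrt π := by
      nlinarith [Real.pi_gt_d6, Real.sqrt_nonneg π]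
    have hs2 : Real.sqrt π ≤ 1.77246 := by
      nlinarith [Real.pi_lt_d6, Real.sqrt_nonneg π]
    have hG1 : 1.32933 ≤ G := by rw [hGval]; linarith
    have hG2 : G ≤ 1.32935 := by rw [hGval]; linarith
    have hGpos : 0 < G := by linarith
    -- convexity bound on Gamma(a+2)
    have hgg_le : gg ≤ 1 + 2*a*(G-1) := by
      have hcv := Real.convexOn_Gamma.2 (show (2:ℝ) ∈ Set.Ioi (0:ℝ) by norm_num)
        (show (5/2:ℝ) ∈ Set.Ioi (0:ℝ) by norm_num)
        (show (0:ℝ) ≤ 1 - 2*a by linarith) (show (0:ℝ) ≤ 2*a by linarith)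
        (show (1 - 2*a) + 2*a = 1 by ring)
      simp only [smul_eq_mul] at hcv
      rw [Real.Gamma_two] at hcv
      have harg2 : (1 - 2*a) * 2 + 2*a * (5/2) = a + 2 := by ring
      rw [harg2] at hcv
      rw [hgg_def, hG_def]
      linarith [hcv]
    have hggpos : 0 < gg := by
      rw [hgg_def]; exact Real.Gamma_pos_of_pos (by linarith)
    -- t^2 ≥ 4
    have hu : 4 ≤ t^2 := by
      nlinarith [ht, abs_nonneg t, _root_.sq_abs t]
    have hkey := poly_key' a (t^2) G gg ha.le ha'.le hu hG1 hG2 hggpos.le hgg_le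
    -- cosh bound
    have hcpos : 0 < Real.cosh (π * t) := Real.cosh_pos (π * t)
    have hcosh : π / Real.cosh (π * t) ≤ 2*π*Real.exp (-(π*|t|)) := by
      have habs : Real.cosh (π*t) = Real.cosh (π*|t|) := by
        rw [← Real.cosh_abs (π*t), abs_mul, abs_of_pos Real.pi_pos]
      have h1 : Real.exp (π*|t|)/2 ≤ Real.cosh (π*t) := by
        rw [habs, Real.cosh_eq]
        have := Real.exp_pos (-(π*|t|))
        linarith
      have h2 : Real.exp (-(π*|t|)) * Real.exp (π*|t|) = 1 := by
        rw [← Real.exp_add]; simp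
      rw [div_le_iff₀ hcpos]
      have h3 := mul_le_mul_of_nonneg_left h1
        (by positivity : (0:ℝ) ≤ 2*π*Real.exp (-(π*|t|)))
      have h4 : 2*π*Real.exp (-(π*|t|)) * (Real.exp (π*|t|)/2) = π := by
        linear_combination π * h2
      linarith [h3, h4]
    -- exp square
    have hT2 : (Real.sqrt (2*π) * Real.exp (-π * |t| / 2))^2 = 2*π*Real.exp (-(π*|t|)) := by
      rw [mul_pow, Real.sq_sqrt (by positivity : (0:ℝ) ≤ 2*π), sq, ← Real.exp_add]
      congr 1
      ring
    -- combine squared inequality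
    have hprod := mul_le_mul hkey hcosh (by positivity) (by positivity)
    have hsqle : (M1 * (M0 * B) * gg)^2
        ≤ ((Real.sqrt (2*π) * Real.exp (-π * |t| / 2)) * (N1 * (N0 * G)))^2 := by
      have e1 : (M1 * (M0 * B) * gg)^2 = M1^2 * (M0^2 * (B^2 * gg^2)) := by ring
      have e2 : ((Real.sqrt (2*π) * Real.exp (-π * |t| / 2)) * (N1 * (N0 * G)))^2
          = (Real.sqrt (2*π) * Real.exp (-π * |t| / 2))^2 * (N1^2 * (N0^2 * G^2)) := by ring
      rw [e1, e2, hm1, hm0, hB2, hT2, hn1, hn0]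
      linarith [hprod]
    have hRHS0 : 0 ≤ M1 * (M0 * B) * gg := by positivity
    have hS0 : 0 ≤ (Real.sqrt (2*π) * Real.exp (-π * |t| / 2)) * (N1 * (N0 * G)) := by positivity
    have hle2 : M1 * (M0 * B) * gg
        ≤ (Real.sqrt (2*π) * Real.exp (-π * |t| / 2)) * (N1 * (N0 * G)) := by
      have h := Real.sqrt_le_sqrt hsqle
      rwa [Real.sqrt_sq hRHS0, Real.sqrt_sq hS0] at h
    -- finish
    have hN0pos : 0 < N0 := by rw [hN0_def]; exact norm_pos_iff.mpr hz0
    have hN1pos : 0 < N1 := by rw [hN1_def]; exact norm_pos_iff.mpr hz1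
    have hCpos : 0 < N1 * (N0 * G) := by positivity
    have hfin : A * (N1 * (N0 * G))
        ≤ (Real.sqrt (2*π) * Real.exp (-π * |t| / 2)) * (N1 * (N0 * G)) := by
      linarith [hbs, hle2]
    exact le_of_mul_le_mul_right hfin hCpos
  exact mul_le_mul_of_nonneg_right hmain (le_of_lt hδpow)
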